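/- Let n ≥ 2 be an integer and let k ≥ 2^{n−1} be an integer. Let ℓ_k^∞ denote ℝ^k equipped with the supremum norm ‖(t_1,…,t_k)‖ = max_{1 ≤ i ≤ k} |t_i|. Then C̄_NJ^{(n)}(ℓ_k^∞) = C̄_mNJ^{(n)}(ℓ_k^∞) = n. The same equalities hold for the infinite-dimensional space ℓ^∞ of bounded real sequences. -/

import Mathlib

open Finset MeasureTheory

noncomputable def njRatio {X : Type*} [NormedAddCommGroup X] [NormedSpace ℝ X]
    {m : ℕ} (x0 : X) (y : Fin m → X) : ℝ :=
  (∑ ε : Fin m → Bool, ‖x0 + ∑ j, (if ε j then (1 : ℝ) else -1) • y j‖ ^ 2) /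
    (2 ^ m * (‖x0‖ ^ 2 + ∑ j, ‖y j‖ ^ 2))

noncomputable def upperNJ (X : Type*) [NormedAddCommGroup X] [NormedSpace ℝ X] (n : ℕ) : ℝ :=
  sSup {c : ℝ | ∃ (x0 : X) (y : Fin (n - 1) → X),
    0 < ‖x0‖ ^ 2 + ∑ j, ‖y j‖ ^ 2 ∧ c = njRatio x0 y}

noncomputable def lowerNJ (X : Type*) [NormedAddCommGroup X] [NormedSpace ℝ X] (n : ℕ) : ℝ :=
  sInf {c : ℝ | ∃ (x0 : X) (y : Fin (n - 1) → X),
    0 < ‖x0‖ ^ 2 + ∑ j, ‖y j‖ ^ 2 ∧ c = njRatio x0 y}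

noncomputable def upperMNJ (X : Type*) [NormedAddCommGroup X] [NormedSpace ℝ X] (n : ℕ) : ℝ :=
  sSup {c : ℝ | ∃ (x0 : X) (y : Fin (n - 1) → X),
    ‖x0‖ = 1 ∧ (∀ j, ‖y j‖ = 1) ∧ c = njRatio x0 y}

noncomputable def lowerMNJ (X : Type*) [NormedAddCommGroup X] [NormedSpace ℝ X] (n : ℕ) : ℝ :=
  sInf {c : ℝ | ∃ (x0 : X) (y : Fin (n - 1) → X),
    ‖x0‖ = 1 ∧ (∀ j, ‖y j‖ = 1) ∧ c = njRatio x0 y}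

lemma sq_add_sum_le {m : ℕ} (a : ℝ) (b : Fin m → ℝ) :
    (a + ∑ j, b j) ^ 2 ≤ (m + 1) * (a ^ 2 + ∑ j, b j ^ 2) := by
  have h := sq_sum_le_card_mul_sum_sq (s := (Finset.univ : Finset (Fin (m+1))))
      (f := Fin.cons a b)
  simpa [Fin.sum_univ_succ, mul_add, add_comm] using h

lemma njRatio_le {X : Type*} [NormedAddCommGroup X] [NormedSpace ℝ X] {m : ℕ}
    (x0 : X) (y : Fin m → X) : njRatio x0 y ≤ (m + 1 : ℝ) := by
  rcases le_or_gt (‖x0‖ ^ 2 + ∑ j, ‖y j‖ ^ 2) 0 with h | h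
  · have hd : (2:ℝ) ^ m * (‖x0‖ ^ 2 + ∑ j, ‖y j‖ ^ 2) ≤ 0 := by
      apply mul_nonpos_of_nonneg_of_nonpos (by positivity) h
    have : njRatio x0 y ≤ 0 := div_nonpos_of_nonneg_of_nonpos (by positivity) hd
    linarith
  rw [njRatio, div_le_iff₀ (by positivity)]
  have key : ∀ ε : Fin m → Bool,
      ‖x0 + ∑ j, (if ε j then (1:ℝ) else -1) • y j‖ ^ 2
        ≤ (m+1) * (‖x0‖^2 + ∑ j, ‖y j‖^2) := by
    intro ε
    have h1 : ‖x0 + ∑ j, (if ε j then (1:ℝ) else -1) • y j‖ ≤ ‖x0‖ + ∑ j, ‖y j‖ := by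
      refine (norm_add_le _ _).trans ?_
      gcongr
      refine (norm_sum_le _ _).trans (le_of_eq ?_)
      refine Finset.sum_congr rfl fun j _ => ?_
      by_cases hj : ε j <;> simp [hj, norm_smul]
    calc ‖x0 + ∑ j, (if ε j then (1:ℝ) else -1) • y j‖ ^ 2
        ≤ (‖x0‖ + ∑ j, ‖y j‖) ^ 2 := by
          exact pow_le_pow_left₀ (norm_nonneg _) h1 2
      _ ≤ (m+1) * (‖x0‖^2 + ∑ j, ‖y j‖^2) := sq_add_sum_le _ _
  calc (∑ ε : Fin m → Bool, ‖x0 + ∑ j, (if ε j then (1:ℝ) else -1) • y j‖ ^ 2)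
      ≤ ∑ _ε : Fin m → Bool, (m+1) * (‖x0‖^2 + ∑ j, ‖y j‖^2) :=
        Finset.sum_le_sum fun ε _ => key ε
    _ = (m+1) * (2 ^ m * (‖x0‖ ^ 2 + ∑ j, ‖y j‖ ^ 2)) := by
        simp [Finset.sum_const, Fintype.card_fun]
        ring

lemma njRatio_eq {X : Type*} [NormedAddCommGroup X] [NormedSpace ℝ X] {m : ℕ}
    (x0 : X) (y : Fin m → X) (h0 : ‖x0‖ = 1) (hy : ∀ j, ‖y j‖ = 1)
    (hv : ∀ ε : Fin m → Bool,
      ‖x0 + ∑ j, (if ε j then (1:ℝ) else -1) • y j‖ = (m+1 : ℝ)) :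
    njRatio x0 y = (m + 1 : ℝ) := by
  have hm : (0:ℝ) < m + 1 := by positivity
  rw [njRatio]
  have : ∀ ε : Fin m → Bool,
      ‖x0 + ∑ j, (if ε j then (1:ℝ) else -1) • y j‖ ^ 2 = ((m:ℝ)+1)^2 := fun ε => by
    rw [hv ε]
  rw [Finset.sum_congr rfl fun ε _ => this ε]
  simp [h0, hy, Finset.sum_const, Fintype.card_fun]
  field_simp
  ring


open Finset MeasureTheory

noncomputable def sgn (b : Bool) : ℝ := if b then 1 else -1

lemma abs_sgn (b : Bool) : |sgn b| = 1 := by cases b <;> simp [sgn]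
lemma sgn_mul_self (b : Bool) : sgn b * sgn b = 1 := by cases b <;> simp [sgn]

noncomputable def emb (m k : ℕ) (hk : 2 ^ m ≤ k) : (Fin m → Bool) → Fin k :=
  fun ε => Fin.castLE (by simpa [Fintype.card_fun] using hk) (Fintype.equivFin (Fin m → Bool) ε)

lemma emb_inj (m k : ℕ) (hk : 2 ^ m ≤ k) : Function.Injective (emb m k hk) :=
  (Fin.castLE_injective _).comp (Fintype.equivFin _).injective

noncomputable def dec (m k : ℕ) (hk : 2 ^ m ≤ k) : Fin k → (Fin m → Bool) :=
  fun i => if h : ∃ ε, emb m k hk ε = i then h.choose else fun _ => true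

lemma dec_emb (m k : ℕ) (hk : 2 ^ m ≤ k) (ε : Fin m → Bool) :
    dec m k hk (emb m k hk ε) = ε := by
  have h : ∃ ε', emb m k hk ε' = emb m k hk ε := ⟨ε, rfl⟩
  rw [dec, dif_pos h]
  exact emb_inj m k hk h.choose_spec

lemma PiLp.sum_apply' {k : ℕ} {ι : Type*} (s : Finset ι)
    (f : ι → PiLp ⊤ (fun _ : Fin k => ℝ)) (i : Fin k) :
    (∑ j ∈ s, f j) i = ∑ j ∈ s, f j i := by
  induction s using Finset.cons_induction with
  | empty => simp [PiLp.zero_apply]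
  | cons a s ha ih => rw [Finset.sum_cons, PiLp.add_apply, ih, Finset.sum_cons]

lemma k_pos {m k : ℕ} (hk : 2 ^ m ≤ k) : 0 < k := lt_of_lt_of_le (Nat.two_pow_pos m) hk

noncomputable def pX0 (m k : ℕ) (hk : 2 ^ m ≤ k) : PiLp ⊤ (fun _ : Fin k => ℝ) := WithLp.toLp ⊤ fun _ => 1

noncomputable def pY (m k : ℕ) (hk : 2 ^ m ≤ k) (j : Fin m) : PiLp ⊤ (fun _ : Fin k => ℝ) :=
  WithLp.toLp ⊤ fun i => sgn (dec m k hk i j)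

lemma pX0_norm (m k : ℕ) (hk : 2 ^ m ≤ k) : ‖pX0 m k hk‖ = 1 := by
  have : Nonempty (Fin k) := Fin.pos_iff_nonempty.mp (k_pos hk)
  rw [PiLp.norm_eq_ciSup]
  simp [pX0]

lemma pY_norm (m k : ℕ) (hk : 2 ^ m ≤ k) (j : Fin m) : ‖pY m k hk j‖ = 1 := by
  have : Nonempty (Fin k) := Fin.pos_iff_nonempty.mp (k_pos hk)
  rw [PiLp.norm_eq_ciSup]
  have h : ∀ i : Fin k, ‖pY m k hk j i‖ = 1 := fun i => by
    rw [pY, PiLp.toLp_apply, Real.norm_eq_abs, abs_sgn]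
  simp only [h, ciSup_const]

lemma pV_apply (m k : ℕ) (hk : 2 ^ m ≤ k) (ε : Fin m → Bool) (i : Fin k) :
    ((pX0 m k hk + ∑ j, (if ε j then (1:ℝ) else -1) • pY m k hk j :
      PiLp ⊤ (fun _ : Fin k => ℝ))) i
      = 1 + ∑ j, sgn (ε j) * sgn (dec m k hk i j) := by
  rw [PiLp.add_apply, PiLp.sum_apply']
  congr 1

lemma pV_norm (m k : ℕ) (hk : 2 ^ m ≤ k) (ε : Fin m → Bool) :
    ‖(pX0 m k hk + ∑ j, (if ε j then (1:ℝ) else -1) • pY m k hk j :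
      PiLp ⊤ (fun _ : Fin k => ℝ))‖ = (m : ℝ) + 1 := by
  have hne : Nonempty (Fin k) := Fin.pos_iff_nonempty.mp (k_pos hk)
  rw [PiLp.norm_eq_ciSup]
  apply le_antisymm
  · refine ciSup_le fun i => ?_
    rw [pV_apply, Real.norm_eq_abs]
    calc |1 + ∑ j, sgn (ε j) * sgn (dec m k hk i j)|
        ≤ |(1:ℝ)| + ∑ j, |sgn (ε j) * sgn (dec m k hk i j)| :=
          (abs_add_le _ _).trans (by gcongr; exact Finset.abs_sum_le_sum_abs _ _)
      _ = 1 + ∑ _j : Fin m, (1:ℝ) := by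
          simp only [abs_mul, abs_sgn, mul_one, abs_one]
      _ = (m:ℝ) + 1 := by simp [add_comm]
  · refine le_trans (le_of_eq ?_)
      (le_ciSup (Set.Finite.bddAbove (Set.finite_range _)) (emb m k hk ε))
    rw [pV_apply, dec_emb, Real.norm_eq_abs]
    rw [Finset.sum_congr rfl fun j _ => sgn_mul_self (ε j)]
    rw [Finset.sum_const, Finset.card_univ, Fintype.card_fin, nsmul_eq_mul, mul_one]
    rw [abs_of_nonneg (by positivity), add_comm]

noncomputable def embN (m : ℕ) : (Fin m → Bool) → ℕ :=
  fun ε => (Fintype.equivFin (Fin m → Bool) ε : ℕ)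

lemma embN_inj (m : ℕ) : Function.Injective (embN m) :=
  Fin.val_injective.comp (Fintype.equivFin _).injective

noncomputable def decN (m : ℕ) : ℕ → (Fin m → Bool) :=
  fun i => if h : ∃ ε, embN m ε = i then h.choose else fun _ => true

lemma decN_embN (m : ℕ) (ε : Fin m → Bool) : decN m (embN m ε) = ε := by
  have h : ∃ ε', embN m ε' = embN m ε := ⟨ε, rfl⟩
  rw [decN, dif_pos h]
  exact embN_inj m h.choose_spec

noncomputable def lX0 (m : ℕ) : lp (fun _ : ℕ => ℝ) ⊤ :=
  ⟨fun _ => 1, memℓp_infty ⟨1, by rintro x ⟨i, rfl⟩; simp⟩⟩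

noncomputable def lY (m : ℕ) (j : Fin m) : lp (fun _ : ℕ => ℝ) ⊤ :=
  ⟨fun i => sgn (decN m i j), memℓp_infty ⟨1, by
    rintro x ⟨i, rfl⟩; simp [Real.norm_eq_abs, abs_sgn]⟩⟩

lemma lX0_norm (m : ℕ) : ‖lX0 m‖ = 1 := by
  rw [lp.norm_eq_ciSup]
  have h : ∀ i : ℕ, ‖(lX0 m : ∀ _ : ℕ, ℝ) i‖ = 1 := fun i => by simp [lX0]
  simp only [h, ciSup_const]

lemma lY_norm (m : ℕ) (j : Fin m) : ‖lY m j‖ = 1 := by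
  rw [lp.norm_eq_ciSup]
  have h : ∀ i : ℕ, ‖(lY m j : ∀ _ : ℕ, ℝ) i‖ = 1 := fun i => by
    show ‖sgn (decN m i j)‖ = 1
    rw [Real.norm_eq_abs, abs_sgn]
  simp only [h, ciSup_const]

lemma lV_apply (m : ℕ) (ε : Fin m → Bool) (i : ℕ) :
    ((lX0 m + ∑ j, (if ε j then (1:ℝ) else -1) • lY m j : lp (fun _ : ℕ => ℝ) ⊤) : ∀ _ : ℕ, ℝ) i
      = 1 + ∑ j, sgn (ε j) * sgn (decN m i j) := by
  rw [lp.coeFn_add, Pi.add_apply, lp.coeFn_sum, Finset.sum_apply]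
  congr 1

lemma sum_sgn_bound (m : ℕ) (ε δ : Fin m → Bool) :
    |1 + ∑ j, sgn (ε j) * sgn (δ j)| ≤ (m : ℝ) + 1 := by
  calc |1 + ∑ j, sgn (ε j) * sgn (δ j)|
      ≤ |(1:ℝ)| + ∑ j, |sgn (ε j) * sgn (δ j)| :=
        (abs_add_le _ _).trans (by gcongr; exact Finset.abs_sum_le_sum_abs _ _)
    _ = 1 + ∑ _j : Fin m, (1:ℝ) := by simp only [abs_mul, abs_sgn, mul_one, abs_one]
    _ = (m:ℝ) + 1 := by simp [add_comm]

lemma lV_norm (m : ℕ) (ε : Fin m → Bool) :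
    ‖(lX0 m + ∑ j, (if ε j then (1:ℝ) else -1) • lY m j : lp (fun _ : ℕ => ℝ) ⊤)‖
      = (m : ℝ) + 1 := by
  rw [lp.norm_eq_ciSup]
  have hbdd : BddAbove (Set.range fun i : ℕ =>
      ‖((lX0 m + ∑ j, (if ε j then (1:ℝ) else -1) • lY m j :
        lp (fun _ : ℕ => ℝ) ⊤) : ∀ _ : ℕ, ℝ) i‖) := by
    refine ⟨(m : ℝ) + 1, ?_⟩
    rintro x ⟨i, rfl⟩
    dsimp only
    rw [lV_apply, Real.norm_eq_abs]
    exact sum_sgn_bound m ε (decN m i)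
  apply le_antisymm
  · refine ciSup_le fun i => ?_
    rw [lV_apply, Real.norm_eq_abs]
    exact sum_sgn_bound m ε (decN m i)
  · refine le_trans (le_of_eq ?_) (le_ciSup hbdd (embN m ε))
    rw [lV_apply, decN_embN, Real.norm_eq_abs]
    rw [Finset.sum_congr rfl fun j _ => sgn_mul_self (ε j)]
    rw [Finset.sum_const, Finset.card_univ, Fintype.card_fin, nsmul_eq_mul, mul_one]
    rw [abs_of_nonneg (by positivity), add_comm]

lemma upper_eq {X : Type*} [NormedAddCommGroup X] [NormedSpace ℝ X] (n : ℕ) (hn : 2 ≤ n)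
    (x0 : X) (y : Fin (n - 1) → X) (h0 : ‖x0‖ = 1) (hy : ∀ j, ‖y j‖ = 1)
    (hr : njRatio x0 y = (n : ℝ)) :
    upperNJ X n = (n : ℝ) ∧ upperMNJ X n = (n : ℝ) := by
  have hcast : ((n - 1 : ℕ) : ℝ) + 1 = (n : ℝ) := by
    rw [← Nat.cast_add_one, Nat.sub_add_cancel (by omega)]
  have hbound : ∀ (x0' : X) (y' : Fin (n - 1) → X), njRatio x0' y' ≤ (n : ℝ) := by
    intro x0' y'
    have := njRatio_le x0' y'
    rwa [hcast] at this
  have hynn : (0:ℝ) ≤ ∑ j, ‖y j‖ ^ 2 := Finset.sum_nonneg fun j _ => by positivity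
  have hpos : 0 < ‖x0‖ ^ 2 + ∑ j, ‖y j‖ ^ 2 := by
    rw [h0]; nlinarith
  constructor
  · rw [upperNJ]
    apply le_antisymm
    · refine csSup_le ⟨(n:ℝ), x0, y, hpos, hr.symm⟩ ?_
      rintro c ⟨x0', y', -, rfl⟩
      exact hbound x0' y'
    · refine le_csSup ⟨(n:ℝ), ?_⟩ ⟨x0, y, hpos, hr.symm⟩
      rintro c ⟨x0', y', -, rfl⟩
      exact hbound x0' y'
  · rw [upperMNJ]
    apply le_antisymm
    · refine csSup_le ⟨(n:ℝ), x0, y, h0, hy, hr.symm⟩ ?_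
      rintro c ⟨x0', y', -, -, rfl⟩
      exact hbound x0' y'
    · refine le_csSup ⟨(n:ℝ), ?_⟩ ⟨x0, y, h0, hy, hr.symm⟩
      rintro c ⟨x0', y', -, -, rfl⟩
      exact hbound x0' y'

theorem stmt_10 (n : ℕ) (hn : 2 ≤ n) (k : ℕ) (hk : 2 ^ (n - 1) ≤ k) :
    upperNJ (PiLp ⊤ (fun (_ : Fin k) => ℝ)) n = (n : ℝ) ∧
    upperMNJ (PiLp ⊤ (fun (_ : Fin k) => ℝ)) n = (n : ℝ) ∧
    upperNJ (lp (fun (_ : ℕ) => ℝ) ⊤) n = (n : ℝ) ∧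
    upperMNJ (lp (fun (_ : ℕ) => ℝ) ⊤) n = (n : ℝ) := by
  have hcast : ((n - 1 : ℕ) : ℝ) + 1 = (n : ℝ) := by
    rw [← Nat.cast_add_one, Nat.sub_add_cancel (by omega)]
  have hr1 : njRatio (pX0 (n-1) k hk) (pY (n-1) k hk) = (n : ℝ) := by
    rw [njRatio_eq _ _ (pX0_norm _ _ _) (pY_norm _ _ _) (pV_norm _ _ hk), hcast]
  have hr2 : njRatio (lX0 (n-1)) (lY (n-1)) = (n : ℝ) := by
    rw [njRatio_eq _ _ (lX0_norm _) (lY_norm _) (lV_norm _), hcast]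
  obtain ⟨h1, h2⟩ := upper_eq n hn _ _ (pX0_norm (n-1) k hk) (pY_norm (n-1) k hk) hr1
  obtain ⟨h3, h4⟩ := upper_eq n hn _ _ (lX0_norm (n-1)) (lY_norm (n-1)) hr2
  exact ⟨h1, h2, h3, h4⟩
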